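/- Let p be an odd prime, G a group, and z ∈ G a central element of order p. Let m̂₁, m̂₂ ∈ G be elements of order p² with m̂₁^p, m̂₂^p ∈ ⟨z⟩, whose commutator lies in ⟨z⟩, and whose images m₁, m₂ in G/⟨z⟩ generate a subgroup of order p². Then ⟨m̂₁, m̂₂⟩ is isomorphic either to ℤ/p²ℤ × ℤ/pℤ or to U_p. -/

import Mathlib

lemma one_add_sq_zero_pow {R : Type*} [CommRing R] (x : R) (hx : x * x = 0) (n : ℕ) :
    (1 + x) ^ n = 1 + (n : R) * x := by
  induction n with
  | zero => simp
  | succ n ih =>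
      calc (1 + x) ^ (n + 1) = (1 + (n : R) * x) * (1 + x) := by rw [pow_succ, ih]
        _ = 1 + ((n : R) + 1) * x + (n : R) * (x * x) := by ring
        _ = 1 + (((n : ℕ) + 1 : ℕ) : R) * x := by rw [hx, mul_zero, add_zero]; push_cast; ring

/-- The unit `1 + p` of `ℤ/p²ℤ`. -/
def upUnit (p : ℕ) : (ZMod (p ^ 2))ˣ :=
  ZMod.unitOfCoprime (1 + p) ((Nat.coprime_add_self_left.mpr (Nat.coprime_one_left p)).pow_right 2)

lemma upUnit_pow (p : ℕ) : upUnit p ^ p = 1 := by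
  ext
  have hx : (p : ZMod (p ^ 2)) * p = 0 := by
    have h : ((p ^ 2 : ℕ) : ZMod (p ^ 2)) = 0 := ZMod.natCast_self _
    push_cast at h
    rw [← h]; ring
  rw [Units.val_pow_eq_pow_val, Units.val_one]
  rw [show ((upUnit p : ZMod (p ^ 2))) = ((1 + p : ℕ) : ZMod (p ^ 2)) from
    ZMod.coe_unitOfCoprime _ _]
  push_cast
  rw [one_add_sq_zero_pow _ hx p, hx, add_zero]

/-- Additive automorphisms of `M` as multiplicative automorphisms of `Multiplicative M`. -/
def addAutToMulAut (M : Type*) [AddGroup M] : Multiplicative (AddAut M) →* MulAut (Multiplicative M) :=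
  MonoidHom.mk' (fun f => AddEquiv.toMultiplicative f.toAdd) (fun _ _ => MulEquiv.ext fun _ => rfl)

/-- The action of `ℤ/pℤ` on `ℤ/p²ℤ` in which the generator `1` acts by multiplication
by `1 + p`. -/
def upAction (p : ℕ) : Multiplicative (ZMod p) →* MulAut (Multiplicative (ZMod (p ^ 2))) :=
  (addAutToMulAut (ZMod (p ^ 2))).comp
    ((AddAut.mulLeft).comp
      (AddMonoidHom.toMultiplicativeLeft
        (ZMod.lift p ⟨zmultiplesHom (Additive (ZMod (p ^ 2))ˣ) (Additive.ofMul (upUnit p)),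
          by
            simp only [zmultiplesHom_apply]
            rw [← ofMul_zpow]
            norm_cast
            rw [upUnit_pow p, ofMul_one]⟩)))

/-- `U_p = ℤ/p²ℤ ⋊ ℤ/pℤ`, a generator of `ℤ/pℤ` acting by multiplication by `1 + p`. -/
abbrev Up (p : ℕ) : Type _ :=
  (Multiplicative (ZMod (p ^ 2))) ⋊[upAction p] (Multiplicative (ZMod p))

/-- The cyclic subgroup generated by a central element is normal. -/
theorem zpowers_normal_of_mem_center {G : Type*} [Group G] {z : G}
    (hz : z ∈ Subgroup.center G) : (Subgroup.zpowers z).Normal := by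
  constructor
  intro n hn g
  obtain ⟨k, rfl⟩ := hn
  have hc : Commute g z := Subgroup.mem_center_iff.mp hz g
  refine ⟨k, ?_⟩
  rw [(hc.zpow_right k).eq, mul_inv_cancel_right]

section helpers
variable {G : Type*} [Group G]

/-- Monoid hom from `Multiplicative (ZMod n)` sending `1` to an element `g` with `g ^ n = 1`. -/
def zmodMulHom (n : ℕ) (g : G) (hg : g ^ (n : ℤ) = 1) : Multiplicative (ZMod n) →* G :=
  AddMonoidHom.toMultiplicativeLeft
    (ZMod.lift n ⟨zmultiplesHom (Additive G) (Additive.ofMul g), by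
      simp only [zmultiplesHom_apply]
      rw [← ofMul_zpow, hg, ofMul_one]⟩)

lemma zmodMulHom_intCast (n : ℕ) (g : G) (hg : g ^ (n : ℤ) = 1) (m : ℤ) :
    zmodMulHom n g hg (Multiplicative.ofAdd ((m : ZMod n))) = g ^ m := by
  simp [zmodMulHom, AddMonoidHom.coe_toMultiplicativeLeft, ZMod.lift_coe]

lemma zmodMulHom_mem_zpowers (n : ℕ) (g : G) (hg : g ^ (n : ℤ) = 1)
    (x : Multiplicative (ZMod n)) : zmodMulHom n g hg x ∈ Subgroup.zpowers g := by
  obtain ⟨m, hm⟩ := ZMod.intCast_surjective (Multiplicative.toAdd x)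
  have : x = Multiplicative.ofAdd ((m : ZMod n)) := by rw [hm]; rfl
  rw [this, zmodMulHom_intCast]
  exact ⟨m, rfl⟩

lemma conj_pow_eq (a b w : G) (haw : Commute a w) (hbw : Commute b w)
    (h : b * a * b⁻¹ = a * w) (n : ℕ) : b ^ n * a * (b ^ n)⁻¹ = a * w ^ n := by
  induction n with
  | zero => simp
  | succ n ih =>
      have e1 : b ^ (n + 1) * a * (b ^ (n + 1))⁻¹
          = b ^ n * (b * a * b⁻¹) * (b ^ n)⁻¹ := by
        rw [pow_succ]; group
      have e2 : Commute ((b ^ n)⁻¹) w := ((hbw.pow_left n).inv_left)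
      rw [e1, h, ← mul_assoc]
      calc b ^ n * a * w * (b ^ n)⁻¹ = b ^ n * a * (b ^ n)⁻¹ * w := by
            rw [mul_assoc (b ^ n * a) w ((b ^ n)⁻¹), ← e2.eq, ← mul_assoc]
        _ = a * w ^ n * w := by rw [ih]
        _ = a * w ^ (n + 1) := by rw [pow_succ, mul_assoc]

lemma mul_pow_of_conj (y u v : G) (huv : Commute u v) (hyv : Commute y v)
    (h : y * u * y⁻¹ = u * v) (n : ℕ) :
    (y * u) ^ n = y ^ n * u ^ n * (v⁻¹) ^ (∑ i ∈ Finset.range n, i) := by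
  set c := v⁻¹ with hc
  have h1 : y⁻¹ * u * (y⁻¹)⁻¹ = u * c := by
    have hv : y⁻¹ * v * y = v := by
      calc y⁻¹ * v * y = v * y⁻¹ * y := by rw [hyv.inv_left.eq]
        _ = v := by group
    have h2 : y⁻¹ * u * y * v = u := by
      calc y⁻¹ * u * y * v = y⁻¹ * u * y * (y⁻¹ * v * y) := by rw [hv]
        _ = y⁻¹ * (u * v) * y := by group
        _ = y⁻¹ * (y * u * y⁻¹) * y := by rw [h]
        _ = u := by group
    rw [inv_inv]
    calc y⁻¹ * u * y = y⁻¹ * u * y * v * v⁻¹ := by group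
      _ = u * c := by rw [h2, hc]
  have key : ∀ m : ℕ, u * y ^ m = y ^ m * (u * c ^ m) := by
    intro m
    have := conj_pow_eq u y⁻¹ c (huv.inv_right) (hyv.inv_left.inv_right) h1 m
    rw [inv_pow] at this
    calc u * y ^ m = y ^ m * ((y ^ m)⁻¹ * u * ((y ^ m)⁻¹)⁻¹) := by group
      _ = y ^ m * (u * c ^ m) := by rw [this]
  induction n with
  | zero => simp
  | succ n ih =>
      have cu : Commute (c ^ n) (u ^ n) := (huv.inv_right.symm).pow_pow n n
      calc (y * u) ^ (n + 1) = (y * u) * (y * u) ^ n := by rw [pow_succ']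
        _ = y * (u * y ^ n) * (u ^ n * c ^ (∑ i ∈ Finset.range n, i)) := by
            rw [ih]; group
        _ = y * (y ^ n * (u * c ^ n)) * (u ^ n * c ^ (∑ i ∈ Finset.range n, i)) := by
            rw [key]
        _ = y ^ (n + 1) * (u * (c ^ n * u ^ n)) * c ^ (∑ i ∈ Finset.range n, i) := by
            rw [pow_succ']; group
        _ = y ^ (n + 1) * (u * (u ^ n * c ^ n)) * c ^ (∑ i ∈ Finset.range n, i) := by
            rw [cu.eq]
        _ = y ^ (n + 1) * u ^ (n + 1) * (c ^ n * c ^ (∑ i ∈ Finset.range n, i)) := by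
            rw [pow_succ']; group
        _ = y ^ (n + 1) * u ^ (n + 1) * c ^ (∑ i ∈ Finset.range (n + 1), i) := by
            rw [← pow_add, Finset.sum_range_succ,
              Nat.add_comm n (∑ i ∈ Finset.range n, i)]

end helpers

lemma upAction_apply (p : ℕ) (j : ℕ) (m : ZMod (p ^ 2)) :
    upAction p (Multiplicative.ofAdd ((j : ZMod p))) (Multiplicative.ofAdd m)
      = Multiplicative.ofAdd ((((1 + p : ℕ) : ZMod (p ^ 2))) ^ j * m) := by
  have hj : ((j : ZMod p)) = (((j : ℤ) : ZMod p)) := by push_cast; rfl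
  rw [hj]
  simp only [upAction, addAutToMulAut, MonoidHom.comp_apply, MonoidHom.mk'_apply,
    AddMonoidHom.coe_toMultiplicativeLeft, Function.comp_apply, toAdd_ofAdd, ZMod.lift_coe]
  simp only [zmultiplesHom_apply]
  rw [← ofMul_zpow]
  show Multiplicative.ofAdd ((AddAut.mulLeft (upUnit p ^ (j : ℤ))) m) = _
  rw [zpow_natCast]
  congr 1

/-- Let `p` be an odd prime, `G` a group, `z ∈ G` central of order `p`, and
`m̂₁, m̂₂ ∈ G` of order `p²` with `m̂₁^p, m̂₂^p ∈ ⟨z⟩`, whose commutator lies in `⟨z⟩` and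
whose images in `G/⟨z⟩` generate a subgroup of order `p²`.  Then `⟨m̂₁, m̂₂⟩` is
isomorphic to `ℤ/p²ℤ × ℤ/pℤ` or to `U_p`. -/
theorem lifts_of_order_p_squared_generate_ZpsqxZp_or_Up
    (p : ℕ) (hp : p.Prime) (hodd : p ≠ 2) {G : Type*} [Group G] (z m1 m2 : G)
    (hz : z ∈ Subgroup.center G) (hzord : orderOf z = p)
    (h1 : orderOf m1 = p ^ 2) (h2 : orderOf m2 = p ^ 2)
    (h1p : m1 ^ p ∈ Subgroup.zpowers z) (h2p : m2 ^ p ∈ Subgroup.zpowers z)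
    (hcomm : m1⁻¹ * m2⁻¹ * m1 * m2 ∈ Subgroup.zpowers z) :
    letI := zpowers_normal_of_mem_center hz
    Nat.card (Subgroup.closure
        {(QuotientGroup.mk m1 : G ⧸ Subgroup.zpowers z), QuotientGroup.mk m2}) = p ^ 2 →
    Nonempty (Subgroup.closure ({m1, m2} : Set G) ≃*
        (Multiplicative (ZMod (p ^ 2)) × Multiplicative (ZMod p))) ∨
    Nonempty (Subgroup.closure ({m1, m2} : Set G) ≃* Up p) := by
  letI := zpowers_normal_of_mem_center hz
  intro hq
  classical
  haveI : Fact p.Prime := ⟨hp⟩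
  haveI : NeZero p := ⟨hp.ne_zero⟩
  haveI : NeZero (p ^ 2) := ⟨pow_ne_zero 2 hp.ne_zero⟩
  set K := Subgroup.zpowers z with hKdef
  set H := Subgroup.closure ({m1, m2} : Set G) with hHdef
  have hm1H : m1 ∈ H := Subgroup.subset_closure (by simp)
  have hm2H : m2 ∈ H := Subgroup.subset_closure (by simp)
  have hcz : ∀ g : G, Commute g z := fun g => Subgroup.mem_center_iff.mp hz g
  have hm1o : m1 ^ ((p ^ 2 : ℕ) : ℤ) = 1 := by
    rw [zpow_natCast, ← h1, pow_orderOf_eq_one]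
  have hm2o : m2 ^ (p ^ 2) = 1 := by rw [← h2]; exact pow_orderOf_eq_one m2
  -- `K` is generated by `m1 ^ p`
  have hordp : orderOf (m1 ^ p) = p := by
    rw [orderOf_pow' m1 hp.ne_zero, h1, Nat.gcd_eq_right (dvd_pow_self p two_ne_zero),
      pow_two, Nat.mul_div_cancel _ hp.pos]
  haveI hfinK : Finite K := by
    have : IsOfFinOrder z := by
      rw [← orderOf_pos_iff, hzord]; exact hp.pos
    exact Set.Finite.to_subtype (finite_zpowers.mpr this)
  have hKcard : Nat.card K = p := by rw [hKdef, Nat.card_zpowers, hzord]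
  have hKeq : Subgroup.zpowers (m1 ^ p) = K :=
    Subgroup.eq_of_le_of_card_ge (Subgroup.zpowers_le.mpr h1p)
      (by rw [Nat.card_zpowers (m1 ^ p), hordp, hKcard])
  obtain ⟨k, hk⟩ : ∃ k : ℤ, (m1 ^ p) ^ k = z := by
    have : z ∈ Subgroup.zpowers (m1 ^ p) := by rw [hKeq]; exact Subgroup.mem_zpowers z
    exact this.imp fun k hk => hk
  have hzk : m1 ^ ((p : ℤ) * k) = z := by
    rw [zpow_mul, zpow_natCast]; exact hk
  obtain ⟨a, ha⟩ : ∃ a : ℤ, z ^ a = m2 ^ p := h2p.imp fun a h => h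
  obtain ⟨c, hc⟩ : ∃ c : ℤ, z ^ c = m1⁻¹ * m2⁻¹ * m1 * m2 := hcomm.imp fun c h => h
  have hKH : K ≤ H := by
    rw [← hKeq, Subgroup.zpowers_le]
    exact pow_mem hm1H p
  -- cardinality of H
  have hcardH : Nat.card H = p ^ 2 * p := by
    let f : H →* (G ⧸ K) := (QuotientGroup.mk' K).comp H.subtype
    have hker : f.ker = Subgroup.comap H.subtype K := by
      rw [show f = (QuotientGroup.mk' K).comp H.subtype from rfl, ← MonoidHom.comap_ker,
        QuotientGroup.ker_mk']
    have hrange : f.range = Subgroup.map (QuotientGroup.mk' K) H := by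
      rw [show f = (QuotientGroup.mk' K).comp H.subtype from rfl, MonoidHom.range_comp,
        Subgroup.range_subtype]
    have hmap : Subgroup.map (QuotientGroup.mk' K) H
        = Subgroup.closure {(QuotientGroup.mk m1 : G ⧸ K), QuotientGroup.mk m2} := by
      rw [hHdef, MonoidHom.map_closure]
      congr 1
      rw [Set.image_insert_eq, Set.image_singleton]
      rfl
    have hcardker : Nat.card f.ker = p := by
      rw [hker, ← hKcard]
      exact Nat.card_congr (Subgroup.subgroupOfEquivOfLe hKH).toEquiv
    have e1 := Subgroup.card_eq_card_quotient_mul_card_subgroup f.ker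
    have e2 : Nat.card (H ⧸ f.ker) = Nat.card f.range :=
      Nat.card_congr (QuotientGroup.quotientKerEquivRange f).toEquiv
    rw [e1, e2, hrange, hmap, hcardker]
    rw [hq]
  haveI hfinH : Finite H := Nat.finite_of_card_ne_zero (by
    rw [hcardH]; exact Nat.mul_ne_zero (pow_ne_zero 2 hp.ne_zero) hp.ne_zero)
  have hcardProd :
      Nat.card (Multiplicative (ZMod (p ^ 2)) × Multiplicative (ZMod p)) = p ^ 2 * p := by
    rw [Nat.card_prod, Nat.card_congr Multiplicative.toAdd, Nat.card_congr Multiplicative.toAdd,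
      Nat.card_zmod, Nat.card_zmod]
  by_cases hab : m1⁻¹ * m2⁻¹ * m1 * m2 = 1
  · -- abelian case
    left
    have hc12 : Commute m1 m2 := by
      have e : m2 * m1 * (m1⁻¹ * m2⁻¹ * m1 * m2) = m1 * m2 := by group
      rw [hab, mul_one] at e
      exact e.symm
    have hb : m2 ^ ((p : ℕ) : ℤ) = m1 ^ ((p : ℤ) * (k * a)) := by
      rw [zpow_natCast, ← ha, ← hzk, ← zpow_mul]
      congr 1
      ring
    set b : ℤ := k * a with hbdef
    set m2' : G := m2 * m1 ^ (-b) with hm2'def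
    have hcm12' : Commute m1 m2' := hc12.mul_right ((Commute.refl m1).zpow_right (-b))
    have hm2'o : m2' ^ ((p : ℕ) : ℤ) = 1 := by
      rw [hm2'def, (hc12.symm.zpow_right (-b)).mul_zpow, hb, ← zpow_mul, ← zpow_add]
      rw [show (p : ℤ) * b + (-b) * (p : ℤ) = 0 by ring, zpow_zero]
    let f1 := zmodMulHom (p ^ 2) m1 hm1o
    let f2 := zmodMulHom p m2' hm2'o
    have hcomm12 : ∀ (x : Multiplicative (ZMod (p ^ 2))) (y : Multiplicative (ZMod p)),
        Commute (f1 x) (f2 y) := by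
      intro x y
      obtain ⟨i, hi⟩ := zmodMulHom_mem_zpowers (p ^ 2) m1 hm1o x
      obtain ⟨j, hj⟩ := zmodMulHom_mem_zpowers p m2' hm2'o y
      rw [← hi, ← hj]
      exact hcm12'.zpow_zpow i j
    let phi := f1.noncommCoprod f2 hcomm12
    have hphi_range : phi.range = H := by
      apply le_antisymm
      · rintro x ⟨u, rfl⟩
        rw [MonoidHom.noncommCoprod_apply]
        have hu1 : f1 u.1 ∈ Subgroup.zpowers m1 := zmodMulHom_mem_zpowers _ _ _ _
        have hu2 : f2 u.2 ∈ Subgroup.zpowers m2' := zmodMulHom_mem_zpowers _ _ _ _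
        have hm2'H : m2' ∈ H := mul_mem hm2H (Subgroup.zpow_mem H hm1H (-b))
        exact mul_mem (Subgroup.zpowers_le.mpr hm1H hu1) (Subgroup.zpowers_le.mpr hm2'H hu2)
      · rw [hHdef]
        apply (Subgroup.closure_le _).mpr
        rintro x hx
        have hx' : x = m1 ∨ x = m2 := by simpa using hx
        rcases hx' with h | h <;> rw [h]
        · refine ⟨(Multiplicative.ofAdd (((1 : ℤ) : ZMod (p ^ 2))), 1), ?_⟩
          rw [MonoidHom.noncommCoprod_apply]
          show f1 (Multiplicative.ofAdd (((1 : ℤ) : ZMod (p ^ 2)))) * f2 1 = m1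
          rw [map_one, mul_one, zmodMulHom_intCast, zpow_one]
        · refine ⟨(Multiplicative.ofAdd ((b : ZMod (p ^ 2))),
            Multiplicative.ofAdd (((1 : ℤ) : ZMod p))), ?_⟩
          rw [MonoidHom.noncommCoprod_apply]
          show f1 (Multiplicative.ofAdd ((b : ZMod (p ^ 2))))
            * f2 (Multiplicative.ofAdd (((1 : ℤ) : ZMod p))) = m2
          rw [zmodMulHom_intCast, zmodMulHom_intCast, zpow_one, hm2'def]
          rw [← mul_assoc, (hc12.zpow_left b).eq]
          group
    have hbij : Function.Bijective phi.rangeRestrict := by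
      rw [Nat.bijective_iff_surjective_and_card]
      refine ⟨phi.rangeRestrict_surjective, ?_⟩
      rw [hcardProd]
      rw [show Nat.card phi.range = Nat.card H by rw [hphi_range]]
      exact hcardH.symm
    exact ⟨((MulEquiv.subgroupCongr hphi_range.symm).trans
      (MulEquiv.ofBijective phi.rangeRestrict hbij).symm)⟩
  · -- nonabelian case: U_p
    right
    set w : G := z ^ c with hwdef
    have hwne : w ≠ 1 := by rw [hc]; exact hab
    have hcw : ∀ g : G, Commute g w := fun g => (hcz g).zpow_right c
    have hzp : z ^ (p : ℕ) = 1 := by rw [← hzord]; exact pow_orderOf_eq_one z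
    have e : m2⁻¹ * m1 * m2 = m1 * w := by
      rw [hc]; group
    have e2 : m2 * m1 * m2⁻¹ * w = m1 := by
      have hwconj : m2 * w * m2⁻¹ = w := by
        rw [(hcw m2).eq, mul_assoc, mul_inv_cancel, mul_one]
      calc m2 * m1 * m2⁻¹ * w = m2 * m1 * m2⁻¹ * (m2 * w * m2⁻¹) := by rw [hwconj]
        _ = m2 * (m1 * w) * m2⁻¹ := by simp [mul_assoc]
        _ = m2 * (m2⁻¹ * m1 * m2) * m2⁻¹ := by rw [e]
        _ = m1 := by simp [mul_assoc]
    have hconj : m2 * m1 * m2⁻¹ = m1 * w⁻¹ := by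
      rw [eq_mul_inv_iff_mul_eq]; exact e2
    have claimB : ∀ n : ℕ, m2 ^ n * m1 * (m2 ^ n)⁻¹ = m1 * (w⁻¹) ^ n :=
      fun n => conj_pow_eq m1 m2 w⁻¹ (hcw m1).inv_right (hcw m2).inv_right hconj n
    set d : ℤ := k * c with hddef
    have hd : w = m1 ^ ((p : ℤ) * d) := by
      rw [hwdef, ← hzk, ← zpow_mul]; congr 1; ring
    have hpd : ¬ ((p : ℤ) ∣ d) := by
      rintro ⟨e', he'⟩
      apply hwne
      rw [hd, he', show (p : ℤ) * ((p : ℤ) * e') = ((p ^ 2 : ℕ) : ℤ) * e' by push_cast; ring,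
        zpow_mul, hm1o, one_zpow]
    have hdd : ((d : ZMod p)) ≠ 0 := by
      rw [Ne, ZMod.intCast_zmod_eq_zero_iff_dvd]; exact hpd
    set s : ℕ := (-(d : ZMod p)⁻¹ : ZMod p).val with hsdef
    have hs' : (d : ZMod p) * ((s : ℕ) : ZMod p) = -1 := by
      rw [hsdef, ZMod.natCast_rightInverse _, mul_neg, mul_inv_cancel₀ hdd]
    have hps : ¬ ((p : ℕ) ∣ s) := by
      intro hdvd
      have h0 : ((s : ℕ) : ZMod p) = 0 := (ZMod.natCast_eq_zero_iff s p).mpr hdvd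
      rw [h0, mul_zero] at hs'
      exact (neg_ne_zero.mpr one_ne_zero) hs'.symm
    set y0 : G := m2 ^ s with hy0def
    have R1 : y0 * m1 * y0⁻¹ = m1 ^ ((1 : ℤ) + p) := by
      have hw1s : (w⁻¹) ^ s = m1 ^ (-((p : ℤ) * d * s)) := by
        rw [hd, ← zpow_neg, ← zpow_natCast, ← zpow_mul]; congr 1; ring
      have hB := claimB s
      rw [hw1s] at hB
      calc y0 * m1 * y0⁻¹ = m1 * m1 ^ (-((p : ℤ) * d * s)) := hB
        _ = m1 ^ ((1 : ℤ) + -((p : ℤ) * d * s)) := by rw [zpow_add, zpow_one]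
        _ = m1 ^ ((1 : ℤ) + p) := by
            rw [zpow_eq_zpow_iff_modEq, h1]
            have hdvd : (p : ℤ) ∣ 1 + d * s := by
              rw [← ZMod.intCast_zmod_eq_zero_iff_dvd]
              push_cast
              rw [hs']
              ring
            obtain ⟨e', he'⟩ := hdvd
            apply Int.modEq_iff_dvd.mpr
            refine ⟨e', ?_⟩
            push_cast
            linear_combination (p : ℤ) * he'
    have hy0p : y0 ^ p = m1 ^ ((p : ℤ) * (k * a * s)) := by
      calc y0 ^ p = (m2 ^ p) ^ s := by rw [hy0def, ← pow_mul, ← pow_mul, mul_comm]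
        _ = (z ^ a) ^ s := by rw [ha]
        _ = m1 ^ ((p : ℤ) * (k * a * s)) := by
            rw [← hzk, ← zpow_natCast ((m1 ^ ((p : ℤ) * k)) ^ a) s, ← zpow_mul, ← zpow_mul]
            congr 1
            ring
    set t : ℤ := k * a * s with htdef
    set u : G := m1 ^ (-t) with hudef
    set v : G := z ^ (-(a * (s : ℤ))) with hvdef
    have hv : v = m1 ^ (-((p : ℤ) * t)) := by
      rw [hvdef, ← hzk, ← zpow_mul]; congr 1; ring
    have hyuv : y0 * u * y0⁻¹ = u * v := by
      have h1' : y0 * u * y0⁻¹ = (y0 * m1 * y0⁻¹) ^ (-t) := by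
        rw [hudef, conj_zpow]
      rw [h1', R1, hv, hudef, ← zpow_mul, ← zpow_add]
      congr 1
      ring
    have huv : Commute u v := (hcz u).zpow_right _
    have hy0v : Commute y0 v := (hcz y0).zpow_right _
    have hyp0 : (y0 * u) ^ p = 1 := by
      rw [mul_pow_of_conj y0 u v huv hy0v hyuv p]
      obtain ⟨q, hq2⟩ : (p : ℕ) ∣ ∑ i ∈ Finset.range p, i := by
        have h2T := Finset.sum_range_id_mul_two p
        have hco : Nat.Coprime p 2 := (Nat.coprime_primes hp Nat.prime_two).mpr hodd
        exact hco.dvd_of_dvd_mul_right ⟨p - 1, by rw [← h2T]⟩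
      have hup : u ^ p = m1 ^ (-(t * p)) := by
        rw [hudef, ← zpow_natCast (m1 ^ (-t)) p, ← zpow_mul]
        congr 1
        ring
      have hvp : (v⁻¹) ^ (∑ i ∈ Finset.range p, i) = 1 := by
        rw [hq2, pow_mul]
        have hv1 : (v⁻¹) ^ p = 1 := by
          rw [hvdef, ← zpow_neg, neg_neg, ← zpow_natCast (z ^ (a * (s : ℤ))) p, ← zpow_mul, mul_comm,
            zpow_mul, zpow_natCast, hzp, one_zpow]
        rw [hv1, one_pow]
      rw [hy0p, hup, hvp, mul_one, ← zpow_add,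
        show (p : ℤ) * t + -(t * p) = 0 by ring, zpow_zero]
    set y : G := y0 * u with hydef
    have hyo : y ^ ((p : ℕ) : ℤ) = 1 := by rw [zpow_natCast]; exact hyp0
    have hyH : y ∈ H := mul_mem (pow_mem hm2H s) (Subgroup.zpow_mem H hm1H (-t))
    have R2 : y * m1 * y⁻¹ = m1 ^ ((1 : ℤ) + p) := by
      have hu1 : u * m1 * u⁻¹ = m1 := by rw [hudef]; group
      calc y * m1 * y⁻¹ = y0 * (u * m1 * u⁻¹) * y0⁻¹ := by rw [hydef]; group
        _ = y0 * m1 * y0⁻¹ := by rw [hu1]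
        _ = m1 ^ ((1 : ℤ) + p) := R1
    have conj_all : ∀ (j : ℕ) (i : ℤ),
        y ^ j * m1 ^ i * (y ^ j)⁻¹ = m1 ^ (((1 : ℤ) + p) ^ j * i) := by
      intro j
      induction j with
      | zero => intro i; simp
      | succ j ih =>
          intro i
          have hstep : y ^ (j + 1) * m1 ^ i * (y ^ (j + 1))⁻¹
              = y * (y ^ j * m1 ^ i * (y ^ j)⁻¹) * y⁻¹ := by
            rw [pow_succ']; group
          rw [hstep, ih i, ← conj_zpow, R2, ← zpow_mul]
          congr 1
          ring
    let f1 := zmodMulHom (p ^ 2) m1 hm1o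
    let f2 := zmodMulHom p y hyo
    have compat : ∀ g : Multiplicative (ZMod p),
        f1.comp ((upAction p) g).toMonoidHom = (MulAut.conj (f2 g)).toMonoidHom.comp f1 := by
      intro g
      apply MonoidHom.ext
      intro x
      obtain ⟨i, hi⟩ := ZMod.intCast_surjective (Multiplicative.toAdd x)
      have hx : x = Multiplicative.ofAdd ((i : ZMod (p ^ 2))) := by rw [hi]; rfl
      set j : ℕ := (Multiplicative.toAdd g).val with hjdef
      have hg : g = Multiplicative.ofAdd ((j : ZMod p)) := by
        have hval : ((j : ℕ) : ZMod p) = Multiplicative.toAdd g :=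
          ZMod.natCast_rightInverse _
        rw [hval]
        rfl
      rw [hx, hg]
      simp only [MonoidHom.comp_apply, MulEquiv.coe_toMonoidHom, MulAut.conj_apply]
      rw [upAction_apply]
      have hcast : (((1 + p : ℕ) : ZMod (p ^ 2))) ^ j * ((i : ℤ) : ZMod (p ^ 2))
          = (((((1 : ℤ) + p) ^ j * i : ℤ)) : ZMod (p ^ 2)) := by push_cast; ring
      rw [hcast, zmodMulHom_intCast, zmodMulHom_intCast]
      have hf2 : f2 (Multiplicative.ofAdd ((j : ZMod p))) = y ^ j := by
        have : ((j : ℕ) : ZMod p) = (((j : ℕ) : ℤ) : ZMod p) := by push_cast; rfl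
        rw [this, zmodMulHom_intCast, zpow_natCast]
      rw [hf2]
      exact (conj_all j i).symm
    let phi := SemidirectProduct.lift f1 f2 compat
    have hphi_range : phi.range = H := by
      apply le_antisymm
      · rintro x ⟨u', rfl⟩
        rw [← SemidirectProduct.inl_left_mul_inr_right u', map_mul,
          SemidirectProduct.lift_inl, SemidirectProduct.lift_inr]
        exact mul_mem
          (Subgroup.zpowers_le.mpr hm1H (zmodMulHom_mem_zpowers _ _ _ _))
          (Subgroup.zpowers_le.mpr hyH (zmodMulHom_mem_zpowers _ _ _ _))
      · rw [hHdef]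
        apply (Subgroup.closure_le _).mpr
        rintro x hx
        have hm1r : m1 ∈ phi.range := by
          refine ⟨SemidirectProduct.inl (Multiplicative.ofAdd (((1 : ℤ) : ZMod (p ^ 2)))), ?_⟩
          rw [SemidirectProduct.lift_inl]
          show zmodMulHom (p ^ 2) m1 hm1o (Multiplicative.ofAdd (((1 : ℤ) : ZMod (p ^ 2)))) = m1
          rw [zmodMulHom_intCast, zpow_one]
        have hx' : x = m1 ∨ x = m2 := by simpa using hx
        rcases hx' with h | h <;> rw [h]
        · exact hm1r
        · have hyr : y ∈ phi.range := by
            refine ⟨SemidirectProduct.inr (Multiplicative.ofAdd (((1 : ℤ) : ZMod p))), ?_⟩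
            rw [SemidirectProduct.lift_inr]
            show zmodMulHom p y hyo (Multiplicative.ofAdd (((1 : ℤ) : ZMod p))) = y
            rw [zmodMulHom_intCast, zpow_one]
          have hy0r : y0 ∈ phi.range := by
            have hy0y : y0 = y * m1 ^ t := by rw [hydef, hudef]; group
            rw [hy0y]
            exact mul_mem hyr (Subgroup.zpow_mem _ hm1r t)
          have hco : Nat.Coprime s (p ^ 2) :=
            Nat.Coprime.pow_right 2 (Nat.coprime_comm.mp (hp.coprime_iff_not_dvd.mpr hps))
          obtain ⟨s', -, hss'⟩ := Nat.exists_mul_mod_eq_one_of_coprime hco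
            (Nat.one_lt_pow two_ne_zero hp.one_lt)
          have hm2eq : (m2 ^ s) ^ s' = m2 := by
            rw [← pow_mul, ← pow_mod_orderOf, h2, hss', pow_one]
          rw [← hm2eq]
          exact pow_mem hy0r s'
    have eqv : Up p ≃ (Multiplicative (ZMod (p ^ 2)) × Multiplicative (ZMod p)) :=
      ⟨fun x => (x.left, x.right), fun c => ⟨c.1, c.2⟩, fun x => by cases x; rfl,
        fun c => rfl⟩
    have hUpcard : Nat.card (Up p) = p ^ 2 * p := by
      rw [Nat.card_congr eqv, hcardProd]
    haveI : Finite (Up p) := Finite.of_equiv _ eqv.symm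
    have hbij : Function.Bijective phi.rangeRestrict := by
      rw [Nat.bijective_iff_surjective_and_card]
      refine ⟨phi.rangeRestrict_surjective, ?_⟩
      rw [hUpcard]
      rw [show Nat.card phi.range = Nat.card H by rw [hphi_range]]
      exact hcardH.symm
    exact ⟨((MulEquiv.subgroupCongr hphi_range.symm).trans
      (MulEquiv.ofBijective phi.rangeRestrict hbij).symm)⟩
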